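/- Let s_1, …, s_{n+1} be i.i.d. real-valued random variables whose common distribution is atomless. Then the rank of s_{n+1} among s_1, …, s_{n+1} is uniformly distributed on {1, …, n+1}; i.e., for every k ∈ {1, …, n+1}, P( #{ j ≤ n : s_j < s_{n+1} } = k − 1 ) = 1/(n+1). (Exchangeability step in the proof of Theorem 3.2: a new conformity score has equal probability of falling into any of the n+1 intervals determined by the n sorted conformity scores.) -/

import Mathlib

set_option maxRecDepth 4000
set_option maxHeartbeats 1000000

open MeasureTheory ProbabilityTheory Finset
open scoped ENNReal

namespace RankAux

variable {m : ℕ}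

/-- The rank of coordinate `i`: number of coordinates strictly below `x i`. -/
noncomputable def rnk (x : Fin m → ℝ) (i : Fin m) : ℕ :=
  (Finset.univ.filter fun j => x j < x i).card

lemma rnk_eq_sum (x : Fin m → ℝ) (i : Fin m) :
    rnk x i = ∑ j, if x j < x i then 1 else 0 :=
  Finset.card_filter _ _

lemma measurable_rnk (i : Fin m) : Measurable fun x : Fin m → ℝ => rnk x i := by
  have h : (fun x : Fin m → ℝ => rnk x i)
      = fun x => ∑ j, if x j < x i then 1 else 0 := by
    funext x; exact rnk_eq_sum x i
  rw [h]
  exact Finset.measurable_sum _ fun j _ =>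
    Measurable.ite (measurableSet_lt (measurable_pi_apply j) (measurable_pi_apply i))
      measurable_const measurable_const

lemma rnk_lt (x : Fin (m + 1) → ℝ) (i : Fin (m + 1)) : rnk x i < m + 1 := by
  unfold rnk
  have hsub : (Finset.univ.filter fun j => x j < x i) ⊆ Finset.univ.erase i := by
    intro j hj
    simp only [Finset.mem_filter] at hj
    refine Finset.mem_erase.2 ⟨?_, Finset.mem_univ _⟩
    rintro rfl; exact lt_irrefl _ hj.2
  have := Finset.card_le_card hsub
  rw [Finset.card_erase_of_mem (Finset.mem_univ i), Finset.card_univ, Fintype.card_fin] at this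
  omega

lemma rnk_lt_rnk {x : Fin m → ℝ} {i i' : Fin m} (h : x i < x i') : rnk x i < rnk x i' := by
  have hnotmem : i ∉ Finset.univ.filter fun j => x j < x i := by
    simp [lt_irrefl]
  have hsub : insert i (Finset.univ.filter fun j => x j < x i)
      ⊆ Finset.univ.filter fun j => x j < x i' := by
    intro j hj
    rcases Finset.mem_insert.1 hj with rfl | hj
    · simp [h]
    · simp only [Finset.mem_filter] at hj ⊢
      exact ⟨hj.1, hj.2.trans h⟩
  have hcard := Finset.card_le_card hsub
  rw [Finset.card_insert_of_notMem hnotmem] at hcard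
  exact Nat.lt_of_lt_of_le (Nat.lt_succ_self _) hcard

lemma rnk_injective {x : Fin m → ℝ} (hx : ∀ i j : Fin m, i ≠ j → x i ≠ x j) :
    Function.Injective fun i => rnk x i := by
  intro i j hij
  by_contra hne
  rcases lt_trichotomy (x i) (x j) with h | h | h
  · exact absurd hij (Nat.ne_of_lt (rnk_lt_rnk h))
  · exact hx i j hne h
  · exact absurd hij.symm (Nat.ne_of_lt (rnk_lt_rnk h))

lemma rnk_surjective {x : Fin (m + 1) → ℝ} (hx : ∀ i j : Fin (m + 1), i ≠ j → x i ≠ x j)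
    {r : ℕ} (hr : r < m + 1) : ∃ i, rnk x i = r := by
  have hinj : Function.Injective fun i : Fin (m + 1) => (⟨rnk x i, rnk_lt x i⟩ : Fin (m + 1)) := by
    intro i j h
    exact rnk_injective hx (by simpa [Fin.ext_iff] using h)
  have hsurj := Finite.surjective_of_injective hinj
  obtain ⟨i, hi⟩ := hsurj ⟨r, hr⟩
  exact ⟨i, by simpa [Fin.ext_iff] using hi⟩

lemma natcard_eq (n : ℕ) (x : Fin (n + 1) → ℝ) :
    Nat.card {j : Fin n // x j.castSucc < x (Fin.last n)} = rnk x (Fin.last n) := by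
  classical
  rw [Nat.card_eq_fintype_card, Fintype.card_subtype]
  unfold rnk
  rw [Finset.card_filter, Finset.card_filter,
    Fin.sum_univ_castSucc (f := fun j => if x j < x (Fin.last n) then 1 else 0)]
  simp

end RankAux

open RankAux

/-- **Exchangeability step in the proof of Theorem 3.2.** If `s_1, …, s_{n+1}` are i.i.d.
real random variables with atomless common distribution, then the rank of `s_{n+1}` among
`s_1, …, s_{n+1}` is uniform on `{1, …, n+1}`: for every `k ∈ {1, …, n+1}`, the probability
that exactly `k − 1` of `s_1, …, s_n` fall strictly below `s_{n+1}` is `1/(n+1)`. -/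
theorem rank_of_new_score_uniform
    {Ω : Type*} [MeasurableSpace Ω]
    (μ : Measure Ω) [IsProbabilityMeasure μ]
    (n : ℕ)
    (s : Fin (n + 1) → Ω → ℝ)
    (hmeas : ∀ i, Measurable (s i))
    (hindep : iIndepFun s μ)
    (hident : ∀ i, μ.map (s i) = μ.map (s 0))
    (hatomless : ∀ x : ℝ, μ {ω | s 0 ω = x} = 0)
    (k : ℕ) (hk1 : 1 ≤ k) (hkn : k ≤ n + 1) :
    (μ {ω | Nat.card {j : Fin n // s j.castSucc ω < s (Fin.last n) ω} = k - 1}).toReal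
      = 1 / (n + 1) := by
  classical
  set ν : Measure ℝ := μ.map (s 0) with hν
  haveI : IsProbabilityMeasure ν := Measure.isProbabilityMeasure_map (hmeas 0).aemeasurable
  set S : Ω → (Fin (n + 1) → ℝ) := fun ω i => s i ω with hSdef
  have hS : Measurable S := measurable_pi_iff.mpr hmeas
  set π : Measure (Fin (n + 1) → ℝ) := Measure.pi (fun _ => ν) with hπ
  -- the joint distribution is the product measure
  have hmap : μ.map S = π := by
    refine (Measure.pi_eq fun t ht => ?_).symm
    rw [Measure.map_apply hS (MeasurableSet.univ_pi ht)]
    have hpre : S ⁻¹' Set.univ.pi t = ⋂ i, s i ⁻¹' t i := by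
      ext ω; simp [hSdef, Set.mem_pi]
    rw [hpre]
    have h1 := (iIndepFun_iff_measure_inter_preimage_eq_mul.1 hindep) Finset.univ
      (fun i _ => ht i)
    simp only [Finset.mem_univ, Set.iInter_true, Set.biInter_univ] at h1
    rw [h1]
    refine Finset.prod_congr rfl fun i _ => ?_
    rw [← Measure.map_apply (hmeas i) (ht i), hident i]
  -- atoms of ν are null
  have hν_atom : ∀ a : ℝ, ν {a} = 0 := by
    intro a
    rw [hν, Measure.map_apply (hmeas 0) (measurableSet_singleton a)]
    exact hatomless a
  -- ties are null
  have hpair : ∀ i j : Fin (n + 1), i ≠ j → μ {ω | s i ω = s j ω} = 0 := by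
    intro i j hij
    have hind : IndepFun (s i) (s j) μ := hindep.indepFun hij
    have hm : μ.map (fun ω => (s i ω, s j ω)) = ν.prod ν := by
      rw [(indepFun_iff_map_prod_eq_prod_map_map (hmeas i).aemeasurable
        (hmeas j).aemeasurable).1 hind, hident i, hident j]
    have hd : MeasurableSet {p : ℝ × ℝ | p.1 = p.2} :=
      measurableSet_eq_fun measurable_fst measurable_snd
    have heq : {ω | s i ω = s j ω} = (fun ω => (s i ω, s j ω)) ⁻¹' {p | p.1 = p.2} := rfl
    rw [heq, ← Measure.map_apply ((hmeas i).prodMk (hmeas j)) hd, hm,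
      Measure.prod_apply hd]
    have hslice : ∀ a : ℝ, ν (Prod.mk a ⁻¹' {p : ℝ × ℝ | p.1 = p.2}) = 0 := by
      intro a
      have : Prod.mk a ⁻¹' {p : ℝ × ℝ | p.1 = p.2} = {a} := by
        ext b; simp [eq_comm]
      rw [this]; exact hν_atom a
    simp only [hslice]
    simp [hν_atom]
  -- the set with no ties
  set T : Set (Fin (n + 1) → ℝ) := ⋂ (i) (j) (_ : i ≠ j), {x | x i ≠ x j} with hTdef
  have hTmem : ∀ x, x ∈ T ↔ ∀ i j : Fin (n + 1), i ≠ j → x i ≠ x j := by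
    intro x; simp [hTdef]
  have hTmeas : MeasurableSet T := by
    refine MeasurableSet.iInter fun i => MeasurableSet.iInter fun j =>
      MeasurableSet.iInter fun _ => ?_
    exact (measurableSet_eq_fun (measurable_pi_apply i) (measurable_pi_apply j)).compl
  have hTc : π Tᶜ = 0 := by
    have hsub : Tᶜ ⊆ ⋃ (i) (j) (_ : i ≠ j), {x : Fin (n + 1) → ℝ | x i = x j} := by
      intro x hx
      simp only [hTdef, Set.compl_iInter, Set.mem_iUnion] at hx ⊢
      obtain ⟨i, j, h, hx⟩ := hx
      exact ⟨i, j, h, by simpa using hx⟩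
    refine measure_mono_null hsub ?_
    refine measure_iUnion_null fun i => measure_iUnion_null fun j =>
      measure_iUnion_null fun hij => ?_
    have hmeq : MeasurableSet {x : Fin (n + 1) → ℝ | x i = x j} :=
      measurableSet_eq_fun (measurable_pi_apply i) (measurable_pi_apply j)
    rw [← hmap, Measure.map_apply hS hmeq]
    exact hpair i j hij
  have hT1 : π T = 1 := by
    have := measure_add_measure_compl (μ := π) hTmeas
    rw [hTc, add_zero] at this
    simpa using this
  -- the rank events
  set B : Fin (n + 1) → Set (Fin (n + 1) → ℝ) := fun i => {x | rnk x i = k - 1} with hBdef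
  have hBmeas : ∀ i, MeasurableSet (B i) := fun i =>
    measurable_rnk i (measurableSet_singleton (k - 1))
  -- all rank events have the same measure, by exchangeability
  have hswap : ∀ i, π (B i) = π (B (Fin.last n)) := by
    intro i
    set σ : Equiv.Perm (Fin (n + 1)) := Equiv.swap i (Fin.last n) with hσ
    set F : (Fin (n + 1) → ℝ) → (Fin (n + 1) → ℝ) := fun x => x ∘ σ with hF
    have hFm : Measurable F := measurable_pi_iff.mpr fun j => measurable_pi_apply _
    have hFmp : π.map F = π := by
      refine (Measure.pi_eq fun t ht => ?_).symm
      rw [Measure.map_apply hFm (MeasurableSet.univ_pi ht)]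
      have hpre : F ⁻¹' Set.univ.pi t = Set.univ.pi fun j => t (σ.symm j) := by
        ext x
        simp only [hF, Set.mem_preimage, Set.mem_pi, Set.mem_univ, forall_const,
          Function.comp_apply]
        constructor
        · intro h j
          have := h (σ.symm j)
          simpa using this
        · intro h j
          have := h (σ j)
          simpa using this
      rw [hpre, Measure.pi_pi]
      exact Equiv.prod_comp σ.symm fun j => ν (t j)
    have hpreB : F ⁻¹' B (Fin.last n) = B i := by
      ext x
      simp only [hBdef, Set.mem_preimage, Set.mem_setOf_eq]
      have hrnk : rnk (x ∘ σ) (Fin.last n) = rnk x i := by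
        rw [rnk_eq_sum, rnk_eq_sum]
        have hl : x (σ (Fin.last n)) = x i := by
          simp [hσ, Equiv.swap_apply_right]
        simp only [Function.comp_apply, hl]
        exact Equiv.sum_comp σ fun j => if x j < x i then 1 else 0
      rw [hrnk]
    rw [← hpreB, ← Measure.map_apply hFm (hBmeas _), hFmp]
  -- the rank events restricted to T partition T
  have hdisj : Pairwise fun i j => Disjoint (B i ∩ T) (B j ∩ T) := by
    intro i j hij
    refine Set.disjoint_left.2 fun x hxi hxj => ?_
    have hx : ∀ a b : Fin (n + 1), a ≠ b → x a ≠ x b := (hTmem x).1 hxi.2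
    have : rnk x i = rnk x j := by
      have h1 : rnk x i = k - 1 := hxi.1
      have h2 : rnk x j = k - 1 := hxj.1
      rw [h1, h2]
    exact hij (rnk_injective hx this)
  have hcover : ⋃ i, (B i ∩ T) = T := by
    apply Set.Subset.antisymm
    · exact Set.iUnion_subset fun i => Set.inter_subset_right
    · intro x hx
      have hxne : ∀ a b : Fin (n + 1), a ≠ b → x a ≠ x b := (hTmem x).1 hx
      obtain ⟨i, hi⟩ := rnk_surjective hxne (r := k - 1) (by omega)
      exact Set.mem_iUnion.2 ⟨i, ⟨hi, hx⟩⟩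
  have hsum : ∑ i : Fin (n + 1), π (B i ∩ T) = 1 := by
    rw [← tsum_fintype (L := .unconditional _), ← measure_iUnion hdisj fun i => (hBmeas i).inter hTmeas, hcover, hT1]
  have hBT : ∀ i, π (B i ∩ T) = π (B i) := fun i => measure_inter_conull hTc
  have hsum2 : (n + 1 : ℝ≥0∞) * π (B (Fin.last n)) = 1 := by
    have : ∑ i : Fin (n + 1), π (B (Fin.last n)) = 1 := by
      rw [← hsum]
      exact Finset.sum_congr rfl fun i _ => ((hBT i).trans (hswap i)).symm
    simpa [Finset.sum_const, mul_comm] using this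
  have hval : π (B (Fin.last n)) = ((n : ℝ≥0∞) + 1)⁻¹ := by
    have hne : ((n : ℝ≥0∞) + 1) ≠ 0 := by simp
    have hnt : ((n : ℝ≥0∞) + 1) ≠ ⊤ := by simp
    calc π (B (Fin.last n)) = ((n : ℝ≥0∞) + 1)⁻¹ * (((n : ℝ≥0∞) + 1) * π (B (Fin.last n))) := by
          rw [← mul_assoc, ENNReal.inv_mul_cancel hne hnt, one_mul]
      _ = ((n : ℝ≥0∞) + 1)⁻¹ := by rw [hsum2, mul_one]
  -- identify the target event
  have htarget : {ω | Nat.card {j : Fin n // s j.castSucc ω < s (Fin.last n) ω} = k - 1}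
      = S ⁻¹' B (Fin.last n) := by
    ext ω
    simp only [Set.mem_setOf_eq, Set.mem_preimage, hBdef]
    have hnc : Nat.card {j : Fin n // s j.castSucc ω < s (Fin.last n) ω}
        = rnk (S ω) (Fin.last n) := natcard_eq n (S ω)
    rw [hnc]
  rw [htarget, ← Measure.map_apply hS (hBmeas _), hmap, hval]
  rw [ENNReal.toReal_inv]
  have : ((n : ℝ≥0∞) + 1).toReal = (n : ℝ) + 1 := by
    rw [show ((n : ℝ≥0∞) + 1) = ((n + 1 : ℕ) : ℝ≥0∞) by push_cast; ring,
      ENNReal.toReal_natCast]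
    push_cast; ring
  rw [this, one_div]
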